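/- Let p, q ∈ ℂ^{n+1} be nonzero with 0 < d(p,q) < π/2, and let u ∈ ℂ^{n+1} satisfy |u| = 1 and u·p̄ = 0. Then the function s ↦ d(cos s·(p/|p|) + sin s·u, q) is differentiable at s = 0 with derivative −Re(u·conj(γ₀'(p,q))). (Equivalently, the gradient of the distance to q at p is −γ₀'(p,q).) -/

import Mathlib

noncomputable section

/-- Hermitian product `w·z̄ = Σᵢ wⁱ·conj(zⁱ)` on `ℂ^m`. -/
def herm {m : ℕ} (w z : EuclideanSpace ℂ (Fin m)) : ℂ :=
  ∑ i, w i * (starRingEnd ℂ) (z i)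

/-- Fubini–Study distance between (the projective classes of) `p` and `q`. -/
def fsDist {m : ℕ} (p q : EuclideanSpace ℂ (Fin m)) : ℝ :=
  Real.arccos (‖herm p q‖ / (‖p‖ * ‖q‖))

/-- Initial velocity `γ₀'(p,q)` of the geodesic from `[p]` to `[q]`. -/
def gammaDir {m : ℕ} (p q : EuclideanSpace ℂ (Fin m)) : EuclideanSpace ℂ (Fin m) :=
  (Real.cot (fsDist p q) : ℂ) • (((‖p‖ : ℂ) / herm q p) • q - (‖p‖ : ℂ)⁻¹ • p)

/-- The geodesic `γ_t(p,q) = cos t·(p/|p|) + sin t·γ₀'(p,q)`. -/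
def geo {m : ℕ} (t : ℝ) (p q : EuclideanSpace ℂ (Fin m)) : EuclideanSpace ℂ (Fin m) :=
  (Real.cos t : ℂ) • ((‖p‖ : ℂ)⁻¹ • p) + (Real.sin t : ℂ) • gammaDir p q

/-- The velocity `γ_t'(p,q) = −sin t·(p/|p|) + cos t·γ₀'(p,q)`. -/
def geoVel {m : ℕ} (t : ℝ) (p q : EuclideanSpace ℂ (Fin m)) : EuclideanSpace ℂ (Fin m) :=
  (-(Real.sin t) : ℂ) • ((‖p‖ : ℂ)⁻¹ • p) + (Real.cos t : ℂ) • gammaDir p q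

open scoped InnerProductSpace

lemma herm_eq_inner {m : ℕ} (w z : EuclideanSpace ℂ (Fin m)) : herm w z = ⟪z, w⟫_ℂ := by
  simp [herm, PiLp.inner_apply, mul_comm]

lemma aux_calc (cd sd nq R aA : ℝ) (hsd : sd ≠ 0) (hcd : cd ≠ 0) (hnq : nq ≠ 0)
    (haA : aA = cd * nq) :
    -(1 / sd) * (2 * R / (2 * aA) / nq) = -(cd / sd * (R / aA ^ 2)) := by
  subst haA; field_simp

theorem stmt4 {n : ℕ} (p q : EuclideanSpace ℂ (Fin (n + 1))) (hp : p ≠ 0) (hq : q ≠ 0)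
    (hd0 : 0 < fsDist p q) (hd2 : fsDist p q < Real.pi / 2)
    (u : EuclideanSpace ℂ (Fin (n + 1))) (hu : ‖u‖ = 1) (hup : herm u p = 0) :
    HasDerivAt
      (fun s : ℝ => fsDist ((Real.cos s : ℂ) • ((‖p‖ : ℂ)⁻¹ • p) + (Real.sin s : ℂ) • u) q)
      (-(herm u (gammaDir p q)).re) 0 := by
  have hpn : (0:ℝ) < ‖p‖ := norm_pos_iff.mpr hp
  have hqn : (0:ℝ) < ‖q‖ := norm_pos_iff.mpr hq
  set d := fsDist p q with hdset
  set P : EuclideanSpace ℂ (Fin (n+1)) := (‖p‖ : ℂ)⁻¹ • p with hPdef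
  set A : ℂ := ⟪q, P⟫_ℂ with hAdef
  set B : ℂ := ⟪q, u⟫_ℂ with hBdef
  have hPu : ⟪P, u⟫_ℂ = 0 := by
    rw [hPdef, inner_smul_left, ← herm_eq_inner, hup, mul_zero]
  have hPnorm : ‖P‖ = 1 := by
    rw [hPdef, norm_smul]
    simp [abs_of_pos hpn, inv_mul_cancel₀ hpn.ne']
  have hAval : A = (‖p‖:ℂ)⁻¹ * herm p q := by
    rw [hAdef, hPdef, inner_smul_right, herm_eq_inner]
  have habsA : ‖A‖ = ‖herm p q‖ / ‖p‖ := by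
    rw [hAval, norm_mul, norm_inv, Complex.norm_real, norm_norm, div_eq_inv_mul]
  set x0 : ℝ := ‖A‖ / ‖q‖ with hx0def
  have hxeq : ‖herm p q‖ / (‖p‖ * ‖q‖) = x0 := by
    rw [hx0def, habsA]; field_simp
  have hx0le : x0 ≤ 1 := by
    rw [hx0def, div_le_one hqn]
    have := norm_inner_le_norm (𝕜 := ℂ) q P
    rw [hPnorm, mul_one] at this
    simpa using this
  have hx0nonneg : (0:ℝ) ≤ x0 := by positivity
  have hcos : Real.cos d = x0 := by
    rw [hdset, fsDist, hxeq, Real.cos_arccos (by linarith) hx0le]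
  have hdpi : d < Real.pi := lt_trans hd2 (by linarith [Real.pi_pos])
  have hcospos : 0 < Real.cos d :=
    Real.cos_pos_of_mem_Ioo ⟨by linarith [Real.pi_pos], hd2⟩
  have hsinpos : 0 < Real.sin d := Real.sin_pos_of_pos_of_lt_pi hd0 hdpi
  have hsin : Real.sin d = Real.sqrt (1 - x0^2) := by
    rw [← hcos]
    exact Real.sin_eq_sqrt_one_sub_cos_sq hd0.le hdpi.le
  have hx0pos : 0 < x0 := hcos ▸ hcospos
  have hAabs : ‖A‖ = Real.cos d * ‖q‖ := by
    rw [hcos, hx0def]; field_simp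
  have hApos : 0 < ‖A‖ := by rw [hAabs]; positivity
  have hAne : A ≠ 0 := by
    intro h; rw [h] at hApos; simp at hApos
  have hx0lt1 : x0 < 1 := by
    rw [← hcos]
    calc Real.cos d < Real.cos 0 :=
      Real.strictAntiOn_cos ⟨le_refl 0, Real.pi_pos.le⟩ ⟨hd0.le, hdpi.le⟩ hd0
    _ = 1 := Real.cos_zero
  -- the moving point
  set F : ℝ → EuclideanSpace ℂ (Fin (n+1)) :=
    fun s => (Real.cos s : ℂ) • P + (Real.sin s : ℂ) • u with hFdef
  have hFnorm : ∀ s, ‖F s‖ = 1 := by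
    intro s
    have hsq : ‖F s‖ ^ 2 = 1 := by
      rw [hFdef]
      simp only
      have e1 : ‖(Real.cos s : ℂ) • P‖ = |Real.cos s| := by
        rw [norm_smul, hPnorm, mul_one, Complex.norm_real, Real.norm_eq_abs]
      have e2 : ‖(Real.sin s : ℂ) • u‖ = |Real.sin s| := by
        rw [norm_smul, hu, mul_one, Complex.norm_real, Real.norm_eq_abs]
      rw [norm_add_sq (𝕜 := ℂ), inner_smul_left, inner_smul_right, hPu, mul_zero, mul_zero,
        map_zero, mul_zero, add_zero, e1, e2, sq_abs, sq_abs]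
      linarith [Real.sin_sq_add_cos_sq s]
    nlinarith [norm_nonneg (F s)]
  have hFherm : ∀ s, herm (F s) q = (Real.cos s : ℂ) * A + (Real.sin s : ℂ) * B := by
    intro s
    rw [herm_eq_inner, hFdef]
    simp [inner_add_right, inner_smul_right, hAdef, hBdef]
  -- rewrite the function
  have hfun : (fun s : ℝ => fsDist ((Real.cos s : ℂ) • ((‖p‖ : ℂ)⁻¹ • p) + (Real.sin s : ℂ) • u) q)
      = fun s => Real.arccos (Real.sqrt (((Real.cos s * A.re + Real.sin s * B.re)^2
          + (Real.cos s * A.im + Real.sin s * B.im)^2)) / ‖q‖) := by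
    funext s
    have h1 : ((Real.cos s : ℂ) • ((‖p‖ : ℂ)⁻¹ • p) + (Real.sin s : ℂ) • u) = F s := rfl
    have hre : ((Real.cos s : ℂ) * A + (Real.sin s : ℂ) * B).re
        = Real.cos s * A.re + Real.sin s * B.re := by
      simp only [Complex.add_re, Complex.mul_re, Complex.ofReal_re, Complex.ofReal_im,
        zero_mul, sub_zero]
    have him : ((Real.cos s : ℂ) * A + (Real.sin s : ℂ) * B).im
        = Real.cos s * A.im + Real.sin s * B.im := by
      simp only [Complex.add_im, Complex.mul_im, Complex.ofReal_re, Complex.ofReal_im,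
        zero_mul, add_zero]
    rw [h1, fsDist, hFherm s, hFnorm s, one_mul, Complex.norm_def, Complex.normSq_apply,
      hre, him]
    congr 2
    ring_nf
  rw [hfun]
  -- derivative of the inside
  set R : ℝ := A.re * B.re + A.im * B.im with hRdef
  have hg1 : HasDerivAt (fun s : ℝ => Real.cos s * A.re + Real.sin s * B.re) B.re 0 := by
    have := ((Real.hasDerivAt_cos 0).mul_const A.re).add ((Real.hasDerivAt_sin 0).mul_const B.re)
    simp at this; exact this
  have hg2 : HasDerivAt (fun s : ℝ => Real.cos s * A.im + Real.sin s * B.im) B.im 0 := by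
    have := ((Real.hasDerivAt_cos 0).mul_const A.im).add ((Real.hasDerivAt_sin 0).mul_const B.im)
    simp at this; exact this
  have hN : HasDerivAt (fun s : ℝ => (Real.cos s * A.re + Real.sin s * B.re)^2
      + (Real.cos s * A.im + Real.sin s * B.im)^2) (2 * R) 0 := by
    have := (hg1.pow 2).add (hg2.pow 2)
    refine this.congr_deriv ?_
    simp [hRdef]; ring
  have hN0 : ((Real.cos 0 * A.re + Real.sin 0 * B.re)^2
      + (Real.cos 0 * A.im + Real.sin 0 * B.im)^2) = ‖A‖ ^ 2 := by
    rw [Complex.sq_norm, Complex.normSq_apply]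
    simp only [Real.cos_zero, Real.sin_zero, one_mul, zero_mul, add_zero]
    ring
  have hN0ne : ((fun s : ℝ => (Real.cos s * A.re + Real.sin s * B.re)^2
      + (Real.cos s * A.im + Real.sin s * B.im)^2) 0) ≠ 0 := by
    simp only [hN0]; positivity
  have hsqrtN : HasDerivAt (fun s : ℝ => Real.sqrt ((Real.cos s * A.re + Real.sin s * B.re)^2
      + (Real.cos s * A.im + Real.sin s * B.im)^2)) (2 * R / (2 * ‖A‖)) 0 := by
    have := hN.sqrt hN0ne
    simp only [hN0] at this
    rwa [Real.sqrt_sq hApos.le] at this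
  have hdiv := hsqrtN.div_const ‖q‖
  have harccos : HasDerivAt Real.arccos (-(1 / Real.sqrt (1 - x0 ^ 2))) (Real.sqrt (((Real.cos 0 * A.re + Real.sin 0 * B.re)^2
      + (Real.cos 0 * A.im + Real.sin 0 * B.im)^2)) / ‖q‖) := by
    have hx0' : Real.sqrt (((Real.cos 0 * A.re + Real.sin 0 * B.re)^2
        + (Real.cos 0 * A.im + Real.sin 0 * B.im)^2)) / ‖q‖ = x0 := by
      rw [hN0, Real.sqrt_sq hApos.le, hx0def]
    rw [hx0']
    exact Real.hasDerivAt_arccos (by linarith) (ne_of_lt hx0lt1)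
  have hcomp := harccos.comp 0 hdiv
  have hpne : (‖p‖ : ℂ) ≠ 0 := by simpa using hpn.ne'
  have hqp : herm p q = (‖p‖ : ℂ) * A := by
    rw [hAval, ← mul_assoc, mul_inv_cancel₀ hpne, one_mul]
  have hgd : herm u (gammaDir p q) = (Real.cot d : ℂ) * (A⁻¹ * B) := by
    rw [herm_eq_inner, gammaDir, inner_smul_left, inner_sub_left, inner_smul_left,
      inner_smul_left]
    have h0 : ⟪p, u⟫_ℂ = 0 := by rw [← herm_eq_inner]; exact hup
    rw [h0, mul_zero, sub_zero]
    have hconj : (starRingEnd ℂ) ((‖p‖ : ℂ) / herm q p) = (‖p‖ : ℂ) / herm p q := by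
      rw [map_div₀, Complex.conj_ofReal]
      congr 1
      rw [herm_eq_inner, herm_eq_inner]
      exact inner_conj_symm _ _
    rw [hconj, hqp, Complex.conj_ofReal, ← hBdef, ← hdset]
    have h1 : (‖p‖:ℂ) / ((‖p‖:ℂ) * A) = A⁻¹ := by
      field_simp
    rw [h1]
  have hre : (herm u (gammaDir p q)).re = Real.cot d * (R / ‖A‖ ^ 2) := by
    rw [hgd]
    have h2 : A⁻¹ * B = (starRingEnd ℂ) A * B / (Complex.normSq A : ℂ) := by
      rw [Complex.inv_def, Complex.ofReal_inv]; ring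
    have h3 : ((starRingEnd ℂ) A * B).re = R := by
      simp [Complex.mul_re, hRdef]
    have h4 : (A⁻¹ * B).re = R / ‖A‖ ^ 2 := by
      rw [h2, Complex.div_ofReal_re, h3, Complex.sq_norm]
    simp only [Complex.mul_re, Complex.ofReal_re, Complex.ofReal_im, zero_mul, sub_zero, h4]
  have hfinal : -(1 / Real.sqrt (1 - x0 ^ 2)) * (2 * R / (2 * ‖A‖) / ‖q‖)
      = -(herm u (gammaDir p q)).re := by
    rw [hre, Real.cot_eq_cos_div_sin, ← hsin]
    exact aux_calc (Real.cos d) (Real.sin d) ‖q‖ R (‖A‖)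
      hsinpos.ne' hcospos.ne' hqn.ne' hAabs
  rw [← hfinal]
  exact hcomp
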